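/- (Spike measures satisfy nearby reflection symmetry) Fix odd k ≥ 1, m dividing k, L a line through the origin in ℂ, z ∈ ℂ, c ≥ 0, and let ν = c·Σ_{n=0}^{m−1} H¹|(e^{πin/m}L + z) be the associated k-spike measure. Then for every y ∈ supp ν and every r > 0: either ν is reflection symmetric about y in B(y,r) (i.e., ν(2y − E) = ν(E) for all Borel E ⊂ B(y,r)), or |y − z| ≤ r/sin(π/k); and ν is reflection symmetric about z in every ball B(z,R). -/

import Mathlib

open MeasureTheory Metric Set
open scoped ENNReal NNReal Real

noncomputable section

/-- Reflection symmetry of a measure `ν` on `ℂ` about `w` inside a ball `B`. -/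
def reflSymmOn (ν : Measure ℂ) (w : ℂ) (B : Set ℂ) : Prop :=
  ∀ E : Set ℂ, MeasurableSet E → E ⊆ B → ν ((fun u => 2 * w - u) '' E) = ν E

/-- One line of the spike. -/
def spikeLine (L : Submodule ℝ ℂ) (z : ℂ) (m n : ℕ) : Set ℂ :=
  (fun w : ℂ => Complex.exp ((π * n / m) * Complex.I) * w + z) '' (L : Set ℂ)

lemma refl_isometry (w : ℂ) : Isometry (fun u : ℂ => 2 * w - u) := by
  apply Isometry.of_dist_eq
  intro a b
  simp only [Complex.dist_eq]
  have h : (2 * w - a) - (2 * w - b) = -(a - b) := by ring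
  rw [h, norm_neg]

lemma refl_maps_set (w : ℂ) (S : Set ℂ) (h : ∀ u ∈ S, 2 * w - u ∈ S) :
    (fun u : ℂ => 2 * w - u) '' S = S := by
  apply Set.Subset.antisymm
  · rintro _ ⟨u, hu, rfl⟩; exact h u hu
  · intro u hu
    exact ⟨2 * w - u, h u hu, by ring⟩

lemma refl_restrict (w : ℂ) (S : Set ℂ) (hS : MeasurableSet S)
    (h : ∀ u ∈ S, 2 * w - u ∈ S) (E : Set ℂ) :
    (MeasureTheory.Measure.hausdorffMeasure 1 : Measure ℂ).restrict S
        ((fun u : ℂ => 2 * w - u) '' E)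
      = (MeasureTheory.Measure.hausdorffMeasure 1 : Measure ℂ).restrict S E := by
  have hinj : Function.Injective (fun u : ℂ => 2 * w - u) := by
    intro a b hab
    simpa [sub_right_inj] using hab
  rw [Measure.restrict_apply' hS, Measure.restrict_apply' hS]
  have h1 : (fun u : ℂ => 2 * w - u) '' E ∩ S = (fun u : ℂ => 2 * w - u) '' (E ∩ S) := by
    rw [Set.image_inter hinj, refl_maps_set w S h]
  rw [h1, (refl_isometry w).hausdorffMeasure_image (Or.inl zero_le_one)]

lemma spikeLine_refl (L : Submodule ℝ ℂ) (z w : ℂ) (m n : ℕ)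
    (hw : w ∈ spikeLine L z m n) :
    ∀ u ∈ spikeLine L z m n, 2 * w - u ∈ spikeLine L z m n := by
  obtain ⟨v₀, hv₀, rfl⟩ := hw
  rintro _ ⟨v, hv, rfl⟩
  refine ⟨(2 : ℝ) • v₀ - v, L.sub_mem (L.smul_mem 2 hv₀) hv, ?_⟩
  simp only [smul_sub, Complex.real_smul, Complex.ofReal_ofNat]
  ring

lemma spikeLine_closed (L : Submodule ℝ ℂ) (z : ℂ) (m n : ℕ) :
    IsClosed (spikeLine L z m n) := by
  have hL : IsClosed ((L : Set ℂ)) := Submodule.closed_of_finiteDimensional L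
  have := (affineHomeomorph (Complex.exp ((π * n / m) * Complex.I)) z
    (Complex.exp_ne_zero _)).isClosedMap (L : Set ℂ) hL
  exact this

lemma spikeLine_mem_z (L : Submodule ℝ ℂ) (z : ℂ) (m n : ℕ) : z ∈ spikeLine L z m n :=
  ⟨0, L.zero_mem, by simp⟩

lemma sin_mono_aux {a x : ℝ} (ha : 0 < a) (ha2 : a ≤ π / 2) (h1 : a ≤ x) (h2 : x ≤ π - a) :
    Real.sin a ≤ Real.sin x := by
  have hπ := Real.pi_pos
  have hmem : a ∈ Icc (-(π / 2)) (π / 2) := Set.mem_Icc.mpr ⟨by linarith, ha2⟩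
  rcases le_or_gt x (π / 2) with h | h
  · exact Real.strictMonoOn_sin.monotoneOn hmem (Set.mem_Icc.mpr ⟨by linarith, h⟩) h1
  · calc Real.sin a ≤ Real.sin (π - x) :=
          Real.strictMonoOn_sin.monotoneOn hmem
            (show π - x ∈ Icc (-(π / 2)) (π / 2) from
              Set.mem_Icc.mpr ⟨by linarith, by linarith⟩)
            (by linarith)
      _ = Real.sin x := Real.sin_pi_sub x

lemma key_abs (s t A B : ℝ) :
    |s| * |Real.sin (A - B)| ≤
      ‖((s : ℂ) * Complex.exp ((A : ℂ) * Complex.I)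
        - (t : ℂ) * Complex.exp ((B : ℂ) * Complex.I))‖ := by
  have hE : Complex.exp ((B : ℂ) * Complex.I) * Complex.exp (((A - B : ℝ) : ℂ) * Complex.I)
      = Complex.exp ((A : ℂ) * Complex.I) := by
    rw [← Complex.exp_add]
    congr 1
    push_cast
    ring
  have h1 : (s : ℂ) * Complex.exp ((A : ℂ) * Complex.I)
      - (t : ℂ) * Complex.exp ((B : ℂ) * Complex.I)
      = Complex.exp ((B : ℂ) * Complex.I)
        * ((s : ℂ) * Complex.exp (((A - B : ℝ) : ℂ) * Complex.I) - t) := by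
    rw [← hE]; ring
  rw [h1, norm_mul, Complex.norm_exp_ofReal_mul_I, one_mul]
  have him : ((s : ℂ) * Complex.exp (((A - B : ℝ) : ℂ) * Complex.I) - (t : ℂ)).im
      = s * Real.sin (A - B) := by
    simp only [Complex.sub_im, Complex.mul_im, Complex.ofReal_re, Complex.ofReal_im,
      Complex.exp_ofReal_mul_I_im, Complex.exp_ofReal_mul_I_re, zero_mul, add_zero, sub_zero]
  calc |s| * |Real.sin (A - B)|
      = |((s : ℂ) * Complex.exp (((A - B : ℝ) : ℂ) * Complex.I) - (t : ℂ)).im| := by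
        rw [him, abs_mul]
    _ ≤ _ := Complex.abs_im_le_norm _

set_option maxHeartbeats 8000000 in
/-- Spike measures satisfy nearby reflection symmetry: let
`ν = c Σ_{n<m} H¹|(e^{πin/m}L + z)` be a `k`-spike measure (`m ∣ k`, `k` odd).  For every
`y ∈ supp ν` and `r > 0`, either `ν` is reflection symmetric about `y` in `B(y,r)`, or
`|y - z| ≤ r / sin(π/k)`; moreover `ν` is reflection symmetric about `z` in every ball. -/
theorem statement16 (k m : ℕ) (hk : Odd k) (hk1 : 1 ≤ k) (hm : m ∣ k)
    (L : Submodule ℝ ℂ) (hL : Module.finrank ℝ L = 1) (z : ℂ) (c : ℝ) (hc : 0 ≤ c)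
    (ν : Measure ℂ)
    (hν : ν = ENNReal.ofReal c •
      ∑ n ∈ Finset.range m,
        (MeasureTheory.Measure.hausdorffMeasure 1 : Measure ℂ).restrict
          ((fun w : ℂ => Complex.exp ((π * n / m) * Complex.I) * w + z) '' (L : Set ℂ))) :
    (∀ y : ℂ, (∀ t : ℝ, 0 < t → ν (ball y t) ≠ 0) → ∀ r : ℝ, 0 < r →
        reflSymmOn ν y (ball y r) ∨ dist y z ≤ r / Real.sin (π / k)) ∧
    (∀ R : ℝ, 0 < R → reflSymmOn ν z (ball z R)) := by
  have hπ := Real.pi_pos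
  have hν' : ∀ E : Set ℂ, ν E = ENNReal.ofReal c *
      ∑ n ∈ Finset.range m,
        (MeasureTheory.Measure.hausdorffMeasure 1 : Measure ℂ).restrict (spikeLine L z m n) E := by
    intro E
    rw [hν]
    simp only [Measure.smul_apply, Measure.finset_sum_apply, smul_eq_mul, spikeLine]
  have hmeasS : ∀ n, MeasurableSet (spikeLine L z m n) :=
    fun n => (spikeLine_closed L z m n).measurableSet
  constructor
  · -- first part
    intro y hy r hr
    by_cases hdist : dist y z ≤ r / Real.sin (π / k)
    · exact Or.inr hdist
    push_neg at hdist
    left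
    -- y lies on some line
    have hyU : ∃ n, n < m ∧ y ∈ spikeLine L z m n := by
      by_contra hcon
      push_neg at hcon
      have hUclosed : IsClosed (⋃ n ∈ Finset.range m, spikeLine L z m n) :=
        (Finset.range m).finite_toSet.isClosed_biUnion fun n _ => spikeLine_closed L z m n
      have hyn : y ∉ ⋃ n ∈ Finset.range m, spikeLine L z m n := by
        intro hmem
        obtain ⟨n, hn, h⟩ := Set.mem_iUnion₂.mp hmem
        exact hcon n (Finset.mem_range.mp hn) h
      obtain ⟨t, ht, htball⟩ := Metric.isOpen_iff.mp hUclosed.isOpen_compl y hyn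
      apply hy t ht
      rw [hν']
      have hzero : ∀ n ∈ Finset.range m,
          (MeasureTheory.Measure.hausdorffMeasure 1 : Measure ℂ).restrict (spikeLine L z m n)
            (ball y t) = 0 := by
        intro n hn
        rw [Measure.restrict_apply' (hmeasS n)]
        have hempty : ball y t ∩ spikeLine L z m n = ∅ := by
          rw [Set.eq_empty_iff_forall_notMem]
          rintro u ⟨hu1, hu2⟩
          exact htball hu1 (Set.mem_iUnion₂.mpr ⟨n, hn, hu2⟩)
        rw [hempty, measure_empty]
      rw [Finset.sum_congr rfl hzero]
      simp
    obtain ⟨n₀, hn₀m, hyn₀⟩ := hyU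
    -- linear algebra: a generator of L
    obtain ⟨v, hv0, hvspan⟩ := finrank_eq_one_iff'.mp hL
    -- representation of y
    obtain ⟨u₀, hu₀L, hu₀y⟩ := hyn₀
    simp only at hu₀y
    obtain ⟨s, hs⟩ := hvspan ⟨u₀, hu₀L⟩
    have hsu : (s : ℂ) * (v : ℂ) = u₀ := by
      have h := congrArg (Subtype.val) hs
      simpa [Complex.real_smul] using h
    have hyz : ‖y - z‖ = |s| * ‖(v : ℂ)‖ := by
      rw [← hu₀y]
      have h1 : Complex.exp ((π * n₀ / m) * Complex.I) * u₀ + z - z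
          = Complex.exp ((π * n₀ / m) * Complex.I) * ((s : ℂ) * (v : ℂ)) := by
        rw [hsu]; ring
      rw [h1, norm_mul, norm_mul]
      have hcast : ((π : ℂ) * (n₀ : ℂ) / (m : ℂ)) * Complex.I
          = ((π * n₀ / m : ℝ) : ℂ) * Complex.I := by push_cast; ring
      rw [hcast, Complex.norm_exp_ofReal_mul_I, one_mul, Complex.norm_real, Real.norm_eq_abs]
    -- other lines miss the ball
    have hmiss : ∀ n, n < m → n ≠ n₀ → ∀ u ∈ spikeLine L z m n, r ≤ dist y u := by
      intro n hnm hne u hu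
      have hm2 : 2 ≤ m := by omega
      have hmk : m ≤ k := Nat.le_of_dvd (by omega) hm
      obtain ⟨j, hj⟩ := hk
      have hk3 : 3 ≤ k := by omega
      have hk0' : (0:ℝ) < (k:ℝ) := by exact_mod_cast (by omega : 0 < k)
      have hk3' : (3:ℝ) ≤ (k:ℝ) := by exact_mod_cast hk3
      have hm0' : (0:ℝ) < (m:ℝ) := by exact_mod_cast (by omega : 0 < m)
      have hm2' : (2:ℝ) ≤ (m:ℝ) := by exact_mod_cast hm2
      have hmk' : (m:ℝ) ≤ (k:ℝ) := by exact_mod_cast hmk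
      have hsinkpos : 0 < Real.sin (π / k) := by
        apply Real.sin_pos_of_pos_of_lt_pi
        · positivity
        · rw [div_lt_iff₀ hk0']
          nlinarith
      -- representation of u
      obtain ⟨u₁, hu₁L, hu₁u⟩ := hu
      simp only at hu₁u
      obtain ⟨t', ht'⟩ := hvspan ⟨u₁, hu₁L⟩
      have htu : (t' : ℂ) * (v : ℂ) = u₁ := by
        have h := congrArg (Subtype.val) ht'
        simpa [Complex.real_smul] using h
      set A : ℝ := π * n₀ / m with hA
      set B : ℝ := π * n / m with hB
      have hdistyu : ‖(v : ℂ)‖ *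
          ‖((s : ℂ) * Complex.exp ((A : ℂ) * Complex.I)
            - (t' : ℂ) * Complex.exp ((B : ℂ) * Complex.I))‖ = dist y u := by
        rw [Complex.dist_eq, ← hu₀y, ← hu₁u, ← hsu, ← htu]
        have h2 : Complex.exp ((π * (n₀:ℂ) / m) * Complex.I) * ((s:ℂ) * v) + z
            - (Complex.exp ((π * (n:ℂ) / m) * Complex.I) * ((t':ℂ) * v) + z)
            = ((s : ℂ) * Complex.exp ((A : ℂ) * Complex.I)
              - (t' : ℂ) * Complex.exp ((B : ℂ) * Complex.I)) * v := by
          have hcA : ((π:ℂ) * (n₀:ℂ) / (m:ℂ)) * Complex.I = (A : ℂ) * Complex.I := by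
            rw [hA]; push_cast; ring
          have hcB : ((π:ℂ) * (n:ℂ) / (m:ℂ)) * Complex.I = (B : ℂ) * Complex.I := by
            rw [hB]; push_cast; ring
          rw [hcA, hcB]; ring
        rw [h2, norm_mul]
        ring
      -- the sine bound
      set j' : ℝ := |(n₀ : ℝ) - (n : ℝ)| with hj'
      have hj1 : 1 ≤ j' := by
        rcases lt_or_gt_of_ne hne with h | h
        · have h' : (n:ℝ) + 1 ≤ n₀ := by exact_mod_cast h
          have habs : |(n₀:ℝ) - n| = (n₀:ℝ) - n := abs_of_nonneg (by linarith)
          rw [hj', habs]; linarith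
        · have h' : (n₀:ℝ) + 1 ≤ n := by exact_mod_cast h
          have habs : |(n₀:ℝ) - n| = -((n₀:ℝ) - n) := abs_of_nonpos (by linarith)
          rw [hj', habs]; linarith
      have hjm : j' ≤ (m:ℝ) - 1 := by
        rw [hj', abs_le]
        have h1 : (n:ℝ) + 1 ≤ m := by exact_mod_cast hnm
        have h2 : (n₀:ℝ) + 1 ≤ m := by exact_mod_cast hn₀m
        have h3 : (0:ℝ) ≤ (n:ℝ) := by positivity
        have h4 : (0:ℝ) ≤ (n₀:ℝ) := by positivity
        constructor <;> linarith
      have hABval : A - B = π * ((n₀ : ℝ) - n) / m := by rw [hA, hB]; ring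
      have hsin_nonneg : 0 ≤ Real.sin (π * j' / m) := by
        apply Real.sin_nonneg_of_nonneg_of_le_pi
        · have hj0 : (0:ℝ) ≤ j' := hj' ▸ abs_nonneg _
          exact div_nonneg (mul_nonneg hπ.le hj0) hm0'.le
        · rw [div_le_iff₀ hm0']
          nlinarith [mul_le_mul_of_nonneg_left hjm hπ.le]
      have habs : |Real.sin (A - B)| = Real.sin (π * j' / m) := by
        rw [hABval]
        rcases abs_cases ((n₀:ℝ) - (n:ℝ)) with ⟨heq, _⟩ | ⟨heq, _⟩
        · rw [show π * ((n₀:ℝ) - n) / m = π * j' / m by rw [hj', heq]]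
          exact abs_of_nonneg hsin_nonneg
        · rw [show π * ((n₀:ℝ) - n) / m = -(π * j' / m) by rw [hj', heq]; ring,
            Real.sin_neg, abs_neg]
          exact abs_of_nonneg hsin_nonneg
      have hstep1 : Real.sin (π / k) ≤ Real.sin (π / m) := by
        apply sin_mono_aux
        · positivity
        · rw [div_le_div_iff₀ hk0' (by norm_num : (0:ℝ) < 2)]
          nlinarith
        · rw [div_le_div_iff₀ hk0' hm0']
          nlinarith
        · have h1 : π / m ≤ π / 2 := by
            rw [div_le_div_iff₀ hm0' (by norm_num : (0:ℝ) < 2)]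
            nlinarith
          have h2 : π / k ≤ π / 2 := by
            rw [div_le_div_iff₀ hk0' (by norm_num : (0:ℝ) < 2)]
            nlinarith
          linarith
      have hstep2 : Real.sin (π / m) ≤ Real.sin (π * j' / m) := by
        apply sin_mono_aux
        · positivity
        · rw [div_le_div_iff₀ hm0' (by norm_num : (0:ℝ) < 2)]
          nlinarith
        · rw [div_le_div_iff₀ hm0' hm0']
          nlinarith [mul_le_mul_of_nonneg_left hj1 (mul_nonneg hπ.le hm0'.le)]
        · rw [le_sub_iff_add_le, ← add_div, div_le_iff₀ hm0']
          nlinarith [mul_le_mul_of_nonneg_left hjm hπ.le]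
      have hsinAB : Real.sin (π / k) ≤ |Real.sin (A - B)| := by
        rw [habs]; linarith
      -- combine
      have hyzr : r < ‖y - z‖ * Real.sin (π / k) := by
        rw [← Complex.dist_eq]
        exact (div_lt_iff₀ hsinkpos).mp hdist
      have hchain : ‖y - z‖ * Real.sin (π / k) ≤ dist y u := by
        rw [← hdistyu, hyz]
        calc |s| * ‖(v:ℂ)‖ * Real.sin (π / k)
            ≤ ‖(v:ℂ)‖ * (|s| * |Real.sin (A - B)|) := by
              have h2 := mul_le_mul_of_nonneg_left hsinAB
                (mul_nonneg (abs_nonneg s) (norm_nonneg (v:ℂ)))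
              nlinarith [h2]
          _ ≤ _ := by
              have hka := key_abs s t' A B
              have h0 : (0:ℝ) ≤ ‖(v:ℂ)‖ := norm_nonneg _
              exact mul_le_mul_of_nonneg_left hka h0
      linarith
    -- prove reflection symmetry about y in ball y r
    intro E hE hEB
    rw [hν', hν']
    congr 1
    apply Finset.sum_congr rfl
    intro n hn
    rcases eq_or_ne n n₀ with rfl | hne
    · exact refl_restrict y _ (hmeasS n) (spikeLine_refl L z y m n ⟨u₀, hu₀L, hu₀y⟩) E
    · rw [Measure.restrict_apply' (hmeasS n), Measure.restrict_apply' (hmeasS n)]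
      have hEempty : E ∩ spikeLine L z m n = ∅ := by
        rw [Set.eq_empty_iff_forall_notMem]
        rintro u ⟨hu1, hu2⟩
        have h1 := hmiss n (Finset.mem_range.mp hn) hne u hu2
        have h2 : dist u y < r := mem_ball.mp (hEB hu1)
        rw [dist_comm] at h2
        linarith
      have hFempty : ((fun u : ℂ => 2 * y - u) '' E) ∩ spikeLine L z m n = ∅ := by
        rw [Set.eq_empty_iff_forall_notMem]
        rintro _ ⟨⟨u, huE, rfl⟩, hu2⟩
        have h1 := hmiss n (Finset.mem_range.mp hn) hne (2 * y - u) hu2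
        have h2 : dist u y < r := mem_ball.mp (hEB huE)
        have h3 : dist y (2 * y - u) = dist u y := by
          rw [Complex.dist_eq, Complex.dist_eq]
          have he1 : y - (2 * y - u) = -(y - u) := by ring
          have he2 : u - y = -(y - u) := by ring
          rw [he1, he2, norm_neg]
        rw [h3] at h1
        linarith
      rw [hEempty, hFempty]
  · -- second part: global reflection symmetry about z
    intro R hR E hE hEB
    rw [hν', hν']
    congr 1
    apply Finset.sum_congr rfl
    intro n hn
    exact refl_restrict z _ (hmeasS n) (spikeLine_refl L z z m n (spikeLine_mem_z L z m n)) E
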